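/- Let (Ω, μ) be a probability space and Y : Ω → ℝ a square-integrable random variable with Y ≥ 0 almost everywhere. Let A be a measurable event such that Y = 0 almost everywhere on A. Then Var(Y) = ∫Y² dμ − (∫Y dμ)² ≥ μ(A) · ∫Y² dμ. -/

import Mathlib

open MeasureTheory

/-- Variance lower bound used in Step 3 of the local-to-global lemma:
if `Y ≥ 0` is square-integrable and vanishes a.e. on an event `A`, then
`Var(Y) = E[Y²] − (E[Y])² ≥ μ(A)·E[Y²]`. -/
theorem variance_lower_bound
    {Ω : Type*} [MeasurableSpace Ω] (μ : Measure Ω) [IsProbabilityMeasure μ]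
    (Y : Ω → ℝ) (hY : MemLp Y 2 μ) (hY0 : ∀ᵐ ω ∂μ, 0 ≤ Y ω)
    (A : Set Ω) (hA : MeasurableSet A)
    (hYA : ∀ᵐ ω ∂μ, ω ∈ A → Y ω = 0) :
    (μ A).toReal * ∫ ω, (Y ω) ^ 2 ∂μ
      ≤ (∫ ω, (Y ω) ^ 2 ∂μ) - (∫ ω, Y ω ∂μ) ^ 2 := by
  set I : ℝ := ∫ ω, (Y ω) ^ 2 ∂μ with hIdef
  have hInn : 0 ≤ I := integral_nonneg fun ω => sq_nonneg _
  set f : Ω → ℝ := (Aᶜ).indicator (fun _ => (1:ℝ)) with hfdef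
  have hf_mem : MemLp f 2 μ :=
    memLp_indicator_const 2 hA.compl 1 (Or.inr (measure_ne_top μ _))
  have hf_nonneg : 0 ≤ᵐ[μ] f :=
    Filter.Eventually.of_forall fun ω => Set.indicator_nonneg (fun _ _ => zero_le_one) ω
  -- ∫ Y = ∫ f * Y
  have hEq : ∫ ω, Y ω ∂μ = ∫ ω, f ω * Y ω ∂μ := by
    refine integral_congr_ae ?_
    filter_upwards [hYA] with ω hω
    by_cases h : ω ∈ A
    · simp [hfdef, Set.indicator_of_notMem, h, hω h]
    · simp [hfdef, Set.indicator_of_mem, h]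
  have hpq : Real.HolderConjugate 2 2 := by
    constructor <;> norm_num
  have holder := integral_mul_le_Lp_mul_Lq_of_nonneg (μ := μ) hpq hf_nonneg hY0
    (by simpa using hf_mem) (by simpa using hY)
  -- compute ∫ f ^ (2:ℝ)
  have hf_sq : ∫ ω, f ω ^ (2:ℝ) ∂μ = (μ Aᶜ).toReal := by
    have : ∀ ω, f ω ^ (2:ℝ) = f ω := by
      intro ω
      by_cases h : ω ∈ Aᶜ
      · simp [hfdef, Set.indicator_of_mem, h]
      · simp [hfdef, Set.indicator_of_notMem, h, Real.zero_rpow]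
    simp_rw [this, hfdef]
    rw [integral_indicator_const _ hA.compl]
    simp [Measure.real]
  have hY_sq : ∫ ω, Y ω ^ (2:ℝ) ∂μ = I := by
    rw [hIdef]
    refine integral_congr_ae (Filter.Eventually.of_forall fun ω => ?_)
    simp [Real.rpow_natCast]
  rw [hf_sq, hY_sq] at holder
  set c : ℝ := (μ Aᶜ).toReal with hcdef
  have hc : 0 ≤ c := ENNReal.toReal_nonneg
  -- square the Hölder bound
  have hEY : 0 ≤ ∫ ω, Y ω ∂μ := integral_nonneg_of_ae hY0
  have hsq : (∫ ω, Y ω ∂μ) ^ 2 ≤ c * I := by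
    have h1 : (∫ ω, Y ω ∂μ) ≤ c ^ ((1:ℝ)/2) * I ^ ((1:ℝ)/2) := by
      rw [hEq]; exact holder
    have h2 : (c ^ ((1:ℝ)/2) * I ^ ((1:ℝ)/2)) ^ 2 = c * I := by
      rw [mul_pow, ← Real.rpow_natCast (c ^ ((1:ℝ)/2)) 2,
        ← Real.rpow_natCast (I ^ ((1:ℝ)/2)) 2, ← Real.rpow_mul hc, ← Real.rpow_mul hInn]
      norm_num
    calc (∫ ω, Y ω ∂μ) ^ 2 ≤ (c ^ ((1:ℝ)/2) * I ^ ((1:ℝ)/2)) ^ 2 := by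
          apply pow_le_pow_left₀ hEY h1
      _ = c * I := h2
  -- relate c and μ A
  have hsum : (μ A).toReal + c = 1 := by
    rw [hcdef, ← ENNReal.toReal_add (measure_ne_top μ A) (measure_ne_top μ Aᶜ),
      measure_add_measure_compl hA]
    simp
  nlinarith [hsq, hInn]
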